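/- For every real b with b ≥ 0.773 and b < 1, we have (2b)^b · (1-b)^(1-b) > 1. -/

import Mathlib

/-- For 0.773 ≤ b < 1 we have (2b)^b (1-b)^(1-b) > 1. -/
theorem stmt_4 (b : ℝ) (h₁ : 0.773 ≤ b) (h₂ : b < 1) :
    1 < (2 * b) ^ b * (1 - b) ^ (1 - b) := by
  have h₁' : (773:ℝ)/1000 ≤ b := by norm_num at h₁ ⊢; linarith
  have hb0 : (0:ℝ) < b := by linarith
  have h1b : (0:ℝ) < 1 - b := by linarith
  have h2b : (0:ℝ) < 2 * b := by linarith
  -- the key (very tight) numeric fact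
  have hnat : (1000:ℕ)^1000 < 1546^773 * 227^227 := by decide +kernel
  have hreal : (1000:ℝ)^(1000:ℕ) < 1546^(773:ℕ) * 227^(227:ℕ) := by exact_mod_cast hnat
  have hlog : Real.log ((1000:ℝ)^(1000:ℕ)) < Real.log (1546^(773:ℕ) * 227^(227:ℕ)) :=
    Real.log_lt_log (by positivity) hreal
  rw [Real.log_pow, Real.log_mul (by positivity) (by positivity), Real.log_pow,
    Real.log_pow] at hlog
  push_cast at hlog
  have e1546 : Real.log 1546 = Real.log 2 + Real.log 773 := by
    rw [show (1546:ℝ) = 2 * 773 by norm_num, Real.log_mul (by norm_num) (by norm_num)]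
  -- Gibbs' inequality terms via log x ≤ x - 1
  have t1 : Real.log 773 - Real.log 1000 - Real.log b ≤ (773/1000)/b - 1 := by
    have h := Real.log_le_sub_one_of_pos (show (0:ℝ) < (773/1000)/b by positivity)
    rwa [Real.log_div (by norm_num) hb0.ne', Real.log_div (by norm_num) (by norm_num)] at h
  have t2 : Real.log 227 - Real.log 1000 - Real.log (1-b) ≤ (227/1000)/(1-b) - 1 := by
    have h := Real.log_le_sub_one_of_pos (show (0:ℝ) < (227/1000)/(1-b) by positivity)
    rwa [Real.log_div (by norm_num) h1b.ne', Real.log_div (by norm_num) (by norm_num)] at h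
  have g1 : b * (Real.log 773 - Real.log 1000 - Real.log b) ≤ 773/1000 - b := by
    have h := mul_le_mul_of_nonneg_left t1 hb0.le
    have e : b * ((773/1000)/b - 1) = 773/1000 - b := by field_simp
    rwa [e] at h
  have g2 : (1-b) * (Real.log 227 - Real.log 1000 - Real.log (1-b)) ≤ 227/1000 - (1-b) := by
    have h := mul_le_mul_of_nonneg_left t2 h1b.le
    have e : (1-b) * ((227/1000)/(1-b) - 1) = 227/1000 - (1-b) := by field_simp
    rwa [e] at h
  have hmono : Real.log 227 < Real.log 1546 := Real.log_lt_log (by norm_num) (by norm_num)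
  have hm : 0 ≤ (b - 773/1000) * (Real.log 1546 - Real.log 227) :=
    mul_nonneg (by linarith) (by linarith)
  clear hnat hreal
  have hFpos : 0 < b * Real.log (2*b) + (1-b) * Real.log (1-b) := by
    rw [Real.log_mul (by norm_num) hb0.ne']
    nlinarith [g1, g2, hm, hlog, e1546]
  calc (1:ℝ) = Real.exp 0 := by rw [Real.exp_zero]
    _ < Real.exp (b * Real.log (2*b) + (1-b) * Real.log (1-b)) := Real.exp_lt_exp.mpr hFpos
    _ = (2*b)^b * (1-b)^(1-b) := by
        rw [Real.exp_add, ← Real.log_rpow h2b, ← Real.log_rpow h1b,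
          Real.exp_log (Real.rpow_pos_of_pos h2b _), Real.exp_log (Real.rpow_pos_of_pos h1b _)]
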